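/- Let M be a sequence of positive reals with M_0 = 1, increasing, logarithmically convex, and of moderate growth with constant A (M_{j+k} ≤ A^{j+k} M_j M_k). Then for every real s ≥ 1 there exist constants A_1, A_2 > 0 such that A_1^{j+1}·(M_j)^s ≤ M_{⌊sj⌋} ≤ A_2^{j+1}·(M_j)^s for all j ∈ ℕ. -/

import Mathlib

section aux

variable (M : ℕ → ℝ) (hpos : ∀ j, 0 < M j) (h0 : M 0 = 1)
    (hmono : Monotone M) (hlc : Monotone (fun j => M (j + 1) / M j))

include hpos h0 hmono in
lemma aux_one_le : ∀ j, 1 ≤ M j := fun j => h0 ▸ hmono (Nat.zero_le j)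

include hpos h0 hlc in
lemma aux_ratio_pow : ∀ p, M p ≤ (M (p + 1) / M p) ^ p := by
  intro p
  induction p with
  | zero => simp [h0]
  | succ p ih =>
    have hr : 0 ≤ M (p + 1) / M p := le_of_lt (div_pos (hpos _) (hpos _))
    have h1 : M (p + 1) = M p * (M (p + 1) / M p) := by
      rw [mul_comm, div_mul_cancel₀ _ (hpos p).ne']
    calc M (p + 1) = M p * (M (p + 1) / M p) := h1
      _ ≤ (M (p + 1) / M p) ^ p * (M (p + 1) / M p) :=
          mul_le_mul_of_nonneg_right ih hr
      _ = (M (p + 1) / M p) ^ (p + 1) := by ring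
      _ ≤ (M (p + 2) / M (p + 1)) ^ (p + 1) :=
          pow_le_pow_left₀ hr (hlc (Nat.le_succ p)) _

include hpos h0 hlc in
lemma aux_step : ∀ q, (M q) ^ (q + 1) ≤ (M (q + 1)) ^ q := by
  intro q
  have h := aux_ratio_pow M hpos h0 hlc q
  have hq : 0 ≤ (M q) ^ q := le_of_lt (pow_pos (hpos q) q)
  calc (M q) ^ (q + 1) = (M q) ^ q * M q := by ring
    _ ≤ (M q) ^ q * (M (q + 1) / M q) ^ q := by
        have : M q ≤ (M (q+1) / M q) ^ q := h
        nlinarith [pow_pos (hpos q) q]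
    _ = (M q * (M (q + 1) / M q)) ^ q := by rw [mul_pow]
    _ = (M (q + 1)) ^ q := by
        congr 1
        rw [mul_comm, div_mul_cancel₀ _ (hpos q).ne']

include hpos h0 hlc in
lemma aux_cross : ∀ p q, 1 ≤ p → p ≤ q → (M p) ^ q ≤ (M q) ^ p := by
  intro p q hp hpq
  induction q, hpq using Nat.le_induction with
  | base => exact le_refl _
  | succ q hq ih =>
    have hq0 : q ≠ 0 := by omega
    have key : ((M p) ^ (q + 1)) ^ q ≤ ((M (q + 1)) ^ p) ^ q := by
      calc ((M p) ^ (q + 1)) ^ q = ((M p) ^ q) ^ (q + 1) := by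
            rw [← pow_mul, ← pow_mul]; ring_nf
        _ ≤ ((M q) ^ p) ^ (q + 1) :=
            pow_le_pow_left₀ (le_of_lt (pow_pos (hpos p) q)) ih _
        _ = ((M q) ^ (q + 1)) ^ p := by rw [← pow_mul, ← pow_mul]; ring_nf
        _ ≤ ((M (q + 1)) ^ q) ^ p :=
            pow_le_pow_left₀ (le_of_lt (pow_pos (hpos q) (q+1)))
              (aux_step M hpos h0 hlc q) _
        _ = ((M (q + 1)) ^ p) ^ q := by rw [← pow_mul, ← pow_mul]; ring_nf
    exact (pow_le_pow_iff_left₀ (le_of_lt (pow_pos (hpos p) (q+1)))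
      (le_of_lt (pow_pos (hpos (q+1)) p)) hq0).mp key

end aux

theorem stmt6 (M : ℕ → ℝ) (hpos : ∀ j, 0 < M j) (h0 : M 0 = 1)
    (hmono : Monotone M) (hlc : Monotone (fun j => M (j + 1) / M j))
    (A : ℝ) (hA : 0 < A) (hmg : ∀ j k : ℕ, M (j + k) ≤ A ^ (j + k) * (M j * M k)) :
    ∀ s : ℝ, 1 ≤ s → ∃ A₁ A₂ : ℝ, 0 < A₁ ∧ 0 < A₂ ∧
      ∀ j : ℕ, A₁ ^ (j + 1) * (M j) ^ s ≤ M ⌊s * j⌋₊ ∧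
        M ⌊s * j⌋₊ ≤ A₂ ^ (j + 1) * (M j) ^ s := by
  intro s hs
  have hone := aux_one_le M hpos h0 hmono
  set D : ℝ := max (max A (M 1)) 1 with hD
  have hD1 : (1:ℝ) ≤ D := le_max_right _ _
  have hD0 : (0:ℝ) < D := lt_of_lt_of_le one_pos hD1
  have hAD : A ≤ D := le_trans (le_max_left _ _) (le_max_left _ _)
  have hM1D : M 1 ≤ D := le_trans (le_max_right _ _) (le_max_left _ _)
  set A' : ℝ := max A 1 with hA'
  have hA'1 : (1:ℝ) ≤ A' := le_max_right _ _
  have hA'0 : (0:ℝ) < A' := lt_of_lt_of_le one_pos hA'1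
  have hAA' : A ≤ A' := le_max_left _ _
  set m : ℕ := ⌈s⌉₊ with hm
  have hm1 : 1 ≤ m := by
    rw [hm]; exact Nat.one_le_ceil_iff.mpr (by linarith)
  -- bound M j ≤ D ^ (j*(j+1))
  have hbound : ∀ j, M j ≤ D ^ (j * (j + 1)) := by
    intro j
    induction j with
    | zero => simp [h0]
    | succ j ih =>
      have h1 := hmg j 1
      have : M (j + 1) ≤ D ^ (j + 1) * (D ^ (j * (j + 1)) * D) := by
        calc M (j + 1) ≤ A ^ (j + 1) * (M j * M 1) := h1
          _ ≤ D ^ (j + 1) * (D ^ (j * (j + 1)) * D) := by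
            apply mul_le_mul (pow_le_pow_left₀ hA.le hAD _)
            · exact mul_le_mul ih hM1D (hpos 1).le (le_of_lt (pow_pos hD0 _))
            · exact le_of_lt (mul_pos (hpos j) (hpos 1))
            · positivity
      calc M (j + 1) ≤ D ^ (j + 1) * (D ^ (j * (j + 1)) * D) := this
        _ = D ^ ((j + 1) + (j * (j + 1) + 1)) := by rw [pow_add, pow_add, pow_one]; ring
        _ ≤ D ^ ((j + 1) * (j + 1 + 1)) := pow_le_pow_right₀ hD1 (by nlinarith)
  -- bound M (m*j) ≤ A' ^ (m^2 * j) * M j ^ m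
  have hmul : ∀ j, M (m * j) ≤ A' ^ (m ^ 2 * j) * M j ^ m := by
    intro j
    clear_value m
    clear hm
    induction m, hm1 using Nat.le_induction with
    | base =>
      simpa using le_mul_of_one_le_left (hpos j).le (one_le_pow₀ hA'1)
    | succ k hk ih =>
      have h1 : M ((k + 1) * j) = M (k * j + j) := by ring_nf
      calc M ((k + 1) * j) = M (k * j + j) := h1
        _ ≤ A ^ (k * j + j) * (M (k * j) * M j) := hmg (k*j) j
        _ ≤ A' ^ (k * j + j) * ((A' ^ (k ^ 2 * j) * M j ^ k) * M j) := by
            apply mul_le_mul (pow_le_pow_left₀ hA.le hAA' _)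
            · exact mul_le_mul_of_nonneg_right ih (hpos j).le
            · exact le_of_lt (mul_pos (hpos (k*j)) (hpos j))
            · positivity
        _ = A' ^ ((k * j + j) + k ^ 2 * j) * M j ^ (k + 1) := by
            rw [pow_add]; ring
        _ ≤ A' ^ ((k + 1) ^ 2 * j) * M j ^ (k + 1) := by
            apply mul_le_mul_of_nonneg_right
              (pow_le_pow_right₀ hA'1 (by nlinarith)) (le_of_lt (pow_pos (hpos j) _))
  refine ⟨D⁻¹, A' ^ (m ^ 2), inv_pos.mpr hD0, pow_pos hA'0 _, fun j => ?_⟩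
  rcases Nat.eq_zero_or_pos j with hj0 | hj
  · subst hj0
    simp only [Nat.cast_zero, mul_zero, Nat.floor_zero, h0, Real.one_rpow, mul_one,
      zero_add, pow_one]
    constructor
    · exact inv_le_one_of_one_le₀ hD1
    · exact one_le_pow₀ hA'1
  -- main case j ≥ 1
  set n : ℕ := ⌊s * j⌋₊ with hn
  have hj0' : (0:ℝ) < (j:ℝ) := by exact_mod_cast hj
  have hjn : j ≤ n := by
    rw [hn]; exact Nat.le_floor (le_mul_of_one_le_left (by positivity) hs)
  have hn1 : 1 ≤ n := le_trans hj hjn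
  have hns : (n:ℝ) ≤ s * j := Nat.floor_le (by positivity)
  have hsn1 : s * j ≤ (n:ℝ) + 1 := le_of_lt (Nat.lt_floor_add_one _)
  have hsm : s ≤ (m:ℝ) := Nat.le_ceil s
  have hnm : n ≤ m * j := by
    have h2 : (n:ℝ) ≤ ((m * j : ℕ) : ℝ) := by
      push_cast
      calc (n:ℝ) ≤ s * j := hns
        _ ≤ (m:ℝ) * j := mul_le_mul_of_nonneg_right hsm hj0'.le
    exact_mod_cast h2
  have hcross := aux_cross M hpos h0 hlc
  -- root extraction lemma: from M p ^ q ≤ M q ^ p get M p ^ (q/p : ℝ) ≤ M q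
  have root : ∀ p q : ℕ, 1 ≤ p → p ≤ q → M p ^ ((q:ℝ) / p) ≤ M q := by
    intro p q hp hpq
    have hp0 : (0:ℝ) < (p:ℝ) := by exact_mod_cast hp
    have key := hcross p q hp hpq
    calc M p ^ ((q:ℝ) / p) = ((M p) ^ (q:ℕ) : ℝ) ^ ((p:ℝ)⁻¹) := by
          rw [← Real.rpow_natCast (M p) q, ← Real.rpow_mul (hpos p).le, div_eq_mul_inv]
      _ ≤ ((M q) ^ (p:ℕ) : ℝ) ^ ((p:ℝ)⁻¹) :=
          Real.rpow_le_rpow (pow_pos (hpos p) q).le key (by positivity)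
      _ = M q := by
          rw [← Real.rpow_natCast (M q) p, ← Real.rpow_mul (hpos q).le,
            mul_inv_cancel₀ hp0.ne', Real.rpow_one]
  constructor
  · -- lower bound
    have r1 : M j ^ ((n:ℝ) / j) ≤ M n := root j n hj hjn
    have r4 : M j ^ ((1:ℝ) / j) ≤ D ^ (j + 1) := by
      have hb : M j ≤ (D ^ (j+1)) ^ (j:ℕ) := by
        calc M j ≤ D ^ (j * (j + 1)) := hbound j
          _ = (D ^ (j + 1)) ^ (j:ℕ) := by rw [← pow_mul]; ring_nf
      calc M j ^ ((1:ℝ) / j) ≤ ((D ^ (j+1)) ^ (j:ℕ)) ^ ((1:ℝ)/j) :=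
            Real.rpow_le_rpow (hpos j).le hb (by positivity)
        _ = D ^ (j + 1) := by
            rw [← Real.rpow_natCast (D ^ (j+1)) j, ← Real.rpow_mul (by positivity),
              mul_one_div, div_self hj0'.ne', Real.rpow_one]
    have r2 : M j ^ s ≤ M j ^ (((n:ℝ) + 1) / j) := by
      apply Real.rpow_le_rpow_of_exponent_le (hone j)
      rw [le_div_iff₀ hj0']
      linarith
    have r3 : M j ^ (((n:ℝ) + 1) / j) = M j ^ ((n:ℝ) / j) * M j ^ ((1:ℝ) / j) := by
      rw [← Real.rpow_add (hpos j), ← add_div]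
    have key : M j ^ s ≤ M n * D ^ (j + 1) := by
      calc M j ^ s ≤ M j ^ (((n:ℝ) + 1) / j) := r2
        _ = M j ^ ((n:ℝ) / j) * M j ^ ((1:ℝ) / j) := r3
        _ ≤ M n * D ^ (j + 1) := by
            exact mul_le_mul r1 r4 (Real.rpow_nonneg (hpos j).le _) (hpos n).le
    rw [inv_pow, inv_mul_le_iff₀ (by positivity)]
    linarith [key]
  · -- upper bound
    set e : ℝ := (n:ℝ) / ((m:ℝ) * j) with he
    have hmj0 : (0:ℝ) < (m:ℝ) * j := by
      have : (0:ℝ) < (m:ℝ) := by exact_mod_cast hm1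
      positivity
    have he0 : 0 ≤ e := by positivity
    have he1 : e ≤ 1 := by
      rw [he, div_le_one hmj0]
      exact_mod_cast hnm
    have r5 : M n ≤ (M (m * j)) ^ e := by
      have := root n (m * j) hn1 hnm
      have hcast : ((m * j : ℕ) : ℝ) = (m:ℝ) * j := by push_cast; ring
      -- we have M n ^ ((m*j)/n) ≤ M (m*j); take (n/(m*j)) power instead
      have key := hcross n (m * j) hn1 hnm
      calc M n = ((M n) ^ (m * j : ℕ) : ℝ) ^ (((m:ℝ) * j)⁻¹) := by
            rw [← Real.rpow_natCast (M n) (m*j), ← Real.rpow_mul (hpos n).le, hcast,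
              mul_inv_cancel₀ hmj0.ne', Real.rpow_one]
        _ ≤ ((M (m * j)) ^ (n : ℕ) : ℝ) ^ (((m:ℝ) * j)⁻¹) :=
            Real.rpow_le_rpow (pow_pos (hpos n) _).le key (by positivity)
        _ = (M (m * j)) ^ e := by
            rw [← Real.rpow_natCast (M (m*j)) n, ← Real.rpow_mul (hpos _).le, he,
              div_eq_mul_inv]
    have r6 : (M (m * j)) ^ e ≤ (A' ^ (m ^ 2 * j)) ^ e * (M j ^ m) ^ e := by
      rw [← Real.mul_rpow (pow_pos hA'0 _).le (pow_pos (hpos j) _).le]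
      exact Real.rpow_le_rpow (hpos _).le (hmul j) he0
    have r7 : (A' ^ (m ^ 2 * j) : ℝ) ^ e ≤ (A' ^ (m ^ 2)) ^ (j + 1) := by
      have h1 : (A' ^ (m ^ 2 * j) : ℝ) ^ e ≤ (A' ^ (m ^ 2 * j) : ℝ) ^ (1:ℝ) := by
        apply Real.rpow_le_rpow_of_exponent_le (one_le_pow₀ hA'1) he1
      rw [Real.rpow_one] at h1
      calc (A' ^ (m ^ 2 * j) : ℝ) ^ e ≤ A' ^ (m ^ 2 * j) := h1
        _ = (A' ^ (m ^ 2)) ^ j := by rw [← pow_mul]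
        _ ≤ (A' ^ (m ^ 2)) ^ (j + 1) :=
            pow_le_pow_right₀ (one_le_pow₀ hA'1) (Nat.le_succ j)
    have r8 : (M j ^ m : ℝ) ^ e ≤ M j ^ s := by
      have hm0 : ((m:ℝ)) ≠ 0 := by
        have : (0:ℝ) < (m:ℝ) := by exact_mod_cast hm1
        exact this.ne'
      have h1 : (M j ^ m : ℝ) ^ e = M j ^ ((m:ℝ) * e) := by
        rw [← Real.rpow_natCast (M j) m, ← Real.rpow_mul (hpos j).le]
      have h2 : (m:ℝ) * e = (n:ℝ) / j := by
        rw [he]; field_simp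
      rw [h1, h2]
      apply Real.rpow_le_rpow_of_exponent_le (hone j)
      rw [div_le_iff₀ hj0']
      linarith
    calc M n ≤ (M (m * j)) ^ e := r5
      _ ≤ (A' ^ (m ^ 2 * j)) ^ e * (M j ^ m) ^ e := r6
      _ ≤ (A' ^ (m ^ 2)) ^ (j + 1) * M j ^ s := by
          exact mul_le_mul r7 r8 (Real.rpow_nonneg (pow_pos (hpos j) m).le _) (pow_pos (pow_pos hA'0 _) _).le
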